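/- Let α be a composition with r ≥ 1 parts which is not all-ones, and let k ≥ r. Then a word w over the alphabet {L, R, U_1, …, U_k} is admissible for α (with respect to the poset 𝔑) and satisfies that w.α has width k if and only if w can be written as the concatenation w = u^{(k)} s_k u^{(k−1)} s_{k−1} ⋯ s_{r+1} u^{(r)}, where each u^{(j)} is a (possibly empty) word over {U_1, …, U_j} and each s_j ∈ {L, R} (here the rightmost letter of w acts first on α). -/

import Mathlib

/-- A composition: a finite list of positive integers. -/
def IsComposition (P : List ℕ) : Prop := ∀ x ∈ P, 0 < x

/-- The alphabet `{L, R, U_1, U_2, …}` acting on compositions. -/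
inductive Letter where
  | L : Letter
  | R : Letter
  | U : ℕ → Letter
deriving DecidableEq

/-- The partial action of a letter: `L` prepends a part 1, `R` appends a part 1,
and `U j` increases the `j`-th part by 1 (defined when `1 ≤ j ≤` width). -/
def act : Letter → List ℕ → Option (List ℕ)
  | .L, P => some (1 :: P)
  | .R, P => some (P ++ [1])
  | .U j, P =>
    if 1 ≤ j ∧ j ≤ P.length then some (P.set (j - 1) (P.getD (j - 1) 0 + 1)) else none

/-- The partial action of a word `w = w_m ⋯ w_1` (a list whose head is `w_m`):
the rightmost letter `w_1` acts first. -/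
def actWord : List Letter → List ℕ → Option (List ℕ)
  | [], P => some P
  | t :: w, P => (actWord w P).bind (act t)

/-- A word is admissible for a composition (with respect to the poset 𝔑) if at
every step the action is defined, and the letter `R` is never applied to an
all-ones composition (since there `L` and `R` have the same effect and `L` has
higher priority). -/
def Admissible : List Letter → List ℕ → Prop
  | [], _ => True
  | t :: w, P =>
    Admissible w P ∧
      ∃ Q, actWord w P = some Q ∧ (act t Q).isSome ∧
        (t = Letter.R → ¬ ∀ a ∈ Q, a = 1)

/-- `buildWord u s r n` is the word `u^{(r+n)} s_{r+n} u^{(r+n−1)} s_{r+n−1} ⋯ s_{r+1} u^{(r)}`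
(as a list, the head acting last). -/
def buildWord (u : ℕ → List Letter) (s : ℕ → Letter) (r : ℕ) : ℕ → List Letter
  | 0 => u r
  | n + 1 => u (r + n + 1) ++ s (r + n + 1) :: buildWord u s r n

-- helpers
def Good (P : List ℕ) : Prop := IsComposition P ∧ P.length < P.sum

lemma sum_set_getD : ∀ (P : List ℕ) (i : ℕ), i < P.length →
    (P.set i (P.getD i 0 + 1)).sum = P.sum + 1 := by
  intro P
  induction P with
  | nil => intro i h; simp at h
  | cons x P ih =>
    intro i h
    cases i with
    | zero => simp [List.sum_cons]; ring
    | succ i =>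
      show (x :: P.set i (P.getD i 0 + 1)).sum = (x :: P).sum + 1
      simp only [List.sum_cons]
      rw [ih i (by simpa using h)]; omega

lemma comp_set_getD (P : List ℕ) (i : ℕ) (hP : IsComposition P) :
    IsComposition (P.set i (P.getD i 0 + 1)) := by
  intro x hx
  rcases List.mem_or_eq_of_mem_set hx with h | h
  · exact hP x h
  · omega

lemma allones_sum : ∀ (P : List ℕ), (∀ a ∈ P, a = 1) → P.sum = P.length := by
  intro P
  induction P with
  | nil => simp
  | cons x P ih =>
    intro h
    simp only [List.sum_cons, List.length_cons]
    rw [h x (by simp), ih (fun a ha => h a (by simp [ha]))]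
    ring

lemma comp_le_sum : ∀ (P : List ℕ), IsComposition P → P.length ≤ P.sum := by
  intro P
  induction P with
  | nil => simp
  | cons x P ih =>
    intro h
    have h1 : 0 < x := h x (by simp)
    have h2 := ih (fun a ha => h a (by simp [ha]))
    simp only [List.sum_cons, List.length_cons]; omega

lemma good_of_not_allones : ∀ (P : List ℕ), IsComposition P → (¬ ∀ a ∈ P, a = 1) → Good P := by
  intro P
  induction P with
  | nil => intro _ h; simp at h
  | cons x P ih =>
    intro hc h
    have hx : 0 < x := hc x (by simp)
    have hP : IsComposition P := fun a ha => hc a (by simp [ha])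
    refine ⟨hc, ?_⟩
    by_cases hx1 : x = 1
    · have : ¬ ∀ a ∈ P, a = 1 := by
        intro hall; exact h (by intro a ha; rcases List.mem_cons.1 ha with h' | h'
                                · omega
                                · exact hall a h')
      have := (ih hP this).2
      simp only [List.sum_cons, List.length_cons]; omega
    · have := comp_le_sum P hP
      simp only [List.sum_cons, List.length_cons]; omega

lemma good_not_allones (P : List ℕ) (hP : Good P) : ¬ ∀ a ∈ P, a = 1 := by
  intro h
  have h1 := allones_sum P h
  have h2 := hP.2
  omega

lemma good_act (t : Letter) (P Q : List ℕ) (h : act t P = some Q) (hP : Good P) : Good Q := by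
  obtain ⟨hc, hs⟩ := hP
  cases t with
  | L =>
    simp only [act, Option.some_inj] at h
    subst h
    constructor
    · intro x hx; rcases List.mem_cons.1 hx with h | h; omega; exact hc x h
    · simp only [List.sum_cons, List.length_cons]; omega
  | R =>
    simp only [act, Option.some_inj] at h
    subst h
    constructor
    · intro x hx; rcases List.mem_append.1 hx with h | h
      · exact hc x h
      · simp at h; omega
    · simp; omega
  | U j =>
    simp only [act] at h
    split at h
    · next hj =>
      simp only [Option.some_inj] at h
      subst h
      refine ⟨comp_set_getD _ _ hc, ?_⟩
      rw [sum_set_getD P (j-1) (by omega), List.length_set]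
      omega
    · exact absurd h (by simp)

lemma length_act (t : Letter) (P Q : List ℕ) (h : act t P = some Q) : P.length ≤ Q.length := by
  cases t with
  | L => simp only [act, Option.some_inj] at h; subst h; simp
  | R => simp only [act, Option.some_inj] at h; subst h; simp
  | U j =>
    simp only [act] at h
    split at h
    · simp only [Option.some_inj] at h; subst h; simp
    · exact absurd h (by simp)

lemma length_actWord : ∀ (w : List Letter) (P Q : List ℕ), actWord w P = some Q → P.length ≤ Q.length := by
  intro w
  induction w with
  | nil => intro P Q h; simp only [actWord, Option.some_inj] at h; subst h; exact le_rfl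
  | cons t w ih =>
    intro P Q h
    simp only [actWord] at h
    rcases Option.bind_eq_some_iff.1 h with ⟨Q', h1, h2⟩
    exact (ih P Q' h1).trans (length_act t Q' Q h2)

lemma actWord_append : ∀ (a b : List Letter) (P : List ℕ),
    actWord (a ++ b) P = (actWord b P).bind (actWord a) := by
  intro a b P
  induction a with
  | nil =>
    simp only [List.nil_append]
    cases h : actWord b P <;> simp [h, actWord]
  | cons t a ih =>
    show (actWord (a ++ b) P).bind (act t) = (actWord b P).bind (actWord (t :: a))
    rw [ih, Option.bind_assoc]
    rfl

lemma admissible_append : ∀ (a b : List Letter) (P Q : List ℕ),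
    Admissible b P → actWord b P = some Q → Admissible a Q → Admissible (a ++ b) P := by
  intro a
  induction a with
  | nil => intro b P Q h _ _; simpa using h
  | cons t a ih =>
    intro b P Q hb hQ ha
    obtain ⟨ha', Q₂, hQ₂, hsome, hR⟩ := ha
    refine ⟨ih b P Q hb hQ ha', Q₂, ?_, hsome, hR⟩
    show actWord (a ++ b) P = some Q₂
    rw [actWord_append, hQ]
    exact hQ₂

lemma buildWord_congr : ∀ (n : ℕ) (u u' : ℕ → List Letter) (s s' : ℕ → Letter) (r : ℕ),
    (∀ j, j ≤ r + n → u j = u' j) → (∀ j, j ≤ r + n → s j = s' j) →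
    buildWord u s r n = buildWord u' s' r n := by
  intro n
  induction n with
  | zero => intro u u' s s' r hu hs; simpa [buildWord] using hu r (by omega)
  | succ n ih =>
    intro u u' s s' r hu hs
    simp only [buildWord]
    rw [hu (r+n+1) (by omega), hs (r+n+1) (by omega),
      ih u u' s s' r (fun j hj => hu j (by omega)) (fun j hj => hs j (by omega))]

lemma buildWord_update (u : ℕ → List Letter) (s : ℕ → Letter) (r n : ℕ) (t : Letter) :
    buildWord (Function.update u (r+n) (t :: u (r+n))) s r n = t :: buildWord u s r n := by
  cases n with
  | zero =>
    show Function.update u r (t :: u r) r = t :: u r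
    exact Function.update_self r _ u
  | succ n =>
    show Function.update u (r+n+1) (t :: u (r+n+1)) (r+n+1) ++
        s (r+n+1) :: buildWord (Function.update u (r+n+1) (t :: u (r+n+1))) s r n =
      t :: (u (r+n+1) ++ s (r+n+1) :: buildWord u s r n)
    rw [Function.update_self,
      buildWord_congr n _ u s s r (fun j hj => Function.update_of_ne (by omega) _ u)
        (fun _ _ => rfl)]
    simp

lemma Ugood : ∀ (v : List Letter) (P : List ℕ),
    (∀ t ∈ v, ∃ m, 1 ≤ m ∧ m ≤ P.length ∧ t = Letter.U m) → Good P →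
    Admissible v P ∧ ∃ Q, actWord v P = some Q ∧ Q.length = P.length ∧ Good Q := by
  intro v
  induction v with
  | nil => intro P _ hP; exact ⟨trivial, P, rfl, rfl, hP⟩
  | cons t v ih =>
    intro P hv hP
    obtain ⟨hadm, Q, hQ, hlen, hG⟩ := ih P (fun t ht => hv t (by simp [ht])) hP
    obtain ⟨m, hm1, hm2, ht⟩ := hv t (by simp)
    subst ht
    have hc : 1 ≤ m ∧ m ≤ Q.length := ⟨hm1, by omega⟩
    have hact : act (Letter.U m) Q = some (Q.set (m-1) (Q.getD (m-1) 0 + 1)) := by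
      simp only [act, if_pos hc]
    refine ⟨⟨hadm, Q, hQ, by simp [hact], fun h => nomatch h⟩,
      Q.set (m-1) (Q.getD (m-1) 0 + 1), ?_, ?_, good_act _ Q _ hact hG⟩
    · show (actWord v P).bind (act (Letter.U m)) = _
      rw [hQ]
      simpa using hact
    · simp [hlen]

lemma backward (α : List ℕ) (u : ℕ → List Letter) (s : ℕ → Letter) :
    ∀ n : ℕ,
    (∀ j, α.length ≤ j → j ≤ α.length + n → ∀ t ∈ u j, ∃ m, 1 ≤ m ∧ m ≤ j ∧ t = Letter.U m) →
    (∀ j, α.length < j → j ≤ α.length + n → s j = Letter.L ∨ s j = Letter.R) →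
    Good α →
    Admissible (buildWord u s α.length n) α ∧
      ∃ Q, actWord (buildWord u s α.length n) α = some Q ∧ Q.length = α.length + n ∧ Good Q := by
  intro n
  induction n with
  | zero =>
    intro hu hs hG
    have h := Ugood (u α.length) α (hu α.length le_rfl (by omega)) hG
    obtain ⟨h1, Q, h2, h3, h4⟩ := h
    exact ⟨h1, Q, h2, by omega, h4⟩
  | succ n ih =>
    intro hu hs hG
    obtain ⟨hadm, Q, hQ, hlen, hGQ⟩ :=
      ih (fun j h1 h2 => hu j h1 (by omega)) (fun j h1 h2 => hs j h1 (by omega)) hG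
    have hsor := hs (α.length+n+1) (by omega) (by omega)
    have hact : ∃ Q₂, act (s (α.length+n+1)) Q = some Q₂ ∧ Q₂.length = Q.length + 1 ∧ Good Q₂ := by
      rcases hsor with h | h <;> rw [h]
      · exact ⟨1 :: Q, rfl, by simp, good_act Letter.L Q _ rfl hGQ⟩
      · exact ⟨Q ++ [1], rfl, by simp, good_act Letter.R Q _ rfl hGQ⟩
    obtain ⟨Q₂, hQ₂, hlen₂, hGQ₂⟩ := hact
    have hadm2 : Admissible (s (α.length+n+1) :: buildWord u s α.length n) α :=
      ⟨hadm, Q, hQ, by rw [hQ₂]; rfl, fun _ => good_not_allones Q hGQ⟩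
    have hmid : actWord (s (α.length+n+1) :: buildWord u s α.length n) α = some Q₂ := by
      show (actWord (buildWord u s α.length n) α).bind _ = _
      rw [hQ]
      simpa using hQ₂
    obtain ⟨hadm3, Q₃, hQ₃, hlen₃, hGQ₃⟩ := Ugood (u (α.length+n+1)) Q₂
      (by intro t ht
          obtain ⟨m, h1, h2, h3⟩ := hu (α.length+n+1) (by omega) (by omega) t ht
          exact ⟨m, h1, by omega, h3⟩) hGQ₂
    refine ⟨?_, Q₃, ?_, by omega, hGQ₃⟩
    · exact admissible_append _ _ α Q₂ hadm2 hmid hadm3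
    · show actWord (u (α.length+n+1) ++ (s (α.length+n+1) :: buildWord u s α.length n)) α = some Q₃
      rw [actWord_append, hmid]
      simpa using hQ₃

lemma forward : ∀ (w : List Letter) (P Q : List ℕ), Admissible w P → actWord w P = some Q →
    ∃ u s,
      (∀ j, P.length ≤ j → j ≤ Q.length → ∀ t ∈ u j, ∃ m, 1 ≤ m ∧ m ≤ j ∧ t = Letter.U m) ∧
      (∀ j, P.length < j → j ≤ Q.length → s j = Letter.L ∨ s j = Letter.R) ∧
      w = buildWord u s P.length (Q.length - P.length) := by
  intro w
  induction w with
  | nil =>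
    intro P Q _ h
    simp only [actWord, Option.some_inj] at h
    subst h
    exact ⟨fun _ => [], fun _ => Letter.L, by simp, fun j h1 h2 => Or.inl rfl,
      by simp [buildWord]⟩
  | cons t w ih =>
    intro P Q hadm hQ
    obtain ⟨hadm', Q', hQ', hsome, hR⟩ := hadm
    have hQQ : act t Q' = some Q := by
      have : (actWord w P).bind (act t) = some Q := hQ
      rw [hQ'] at this
      simpa using this
    have hle : P.length ≤ Q'.length := length_actWord w P Q' hQ'
    obtain ⟨u, s, hu, hs, hw⟩ := ih P Q' hadm' hQ'
    cases t with
    | U m =>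
      simp only [act] at hQQ
      split at hQQ
      case isFalse => exact absurd hQQ (by simp)
      case isTrue hc =>
        simp only [Option.some_inj] at hQQ
        have hlen : Q.length = Q'.length := by rw [← hQQ]; simp
        refine ⟨Function.update u Q'.length (Letter.U m :: u Q'.length), s, ?_, ?_, ?_⟩
        · intro j h1 h2 t ht
          by_cases hj : j = Q'.length
          · subst hj
            rw [Function.update_self] at ht
            rcases List.mem_cons.1 ht with h | h
            · exact ⟨m, hc.1, hc.2, h⟩
            · exact hu _ h1 le_rfl t h
          · rw [Function.update_of_ne hj] at ht
            exact hu j h1 (by omega) t ht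
        · intro j h1 h2
          exact hs j h1 (by omega)
        · have hQl : Q'.length = P.length + (Q'.length - P.length) := by omega
          rw [hlen, hw]
          calc Letter.U m :: buildWord u s P.length (Q'.length - P.length)
              = buildWord (Function.update u (P.length + (Q'.length - P.length))
                  (Letter.U m :: u (P.length + (Q'.length - P.length)))) s P.length
                  (Q'.length - P.length) := (buildWord_update u s _ _ _).symm
            _ = _ := by rw [← hQl]
    | L =>
      simp only [act, Option.some_inj] at hQQ
      have hlen : Q.length = Q'.length + 1 := by rw [← hQQ]; simp
      refine ⟨Function.update u (Q'.length + 1) [],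
        Function.update s (Q'.length + 1) Letter.L, ?_, ?_, ?_⟩
      · intro j h1 h2 t ht
        by_cases hj : j = Q'.length + 1
        · subst hj; rw [Function.update_self] at ht; exact absurd ht (by simp)
        · rw [Function.update_of_ne hj] at ht
          exact hu j h1 (by omega) t ht
      · intro j h1 h2
        by_cases hj : j = Q'.length + 1
        · subst hj; rw [Function.update_self]; exact Or.inl rfl
        · rw [Function.update_of_ne hj]; exact hs j h1 (by omega)
      · have hn : Q.length - P.length = (Q'.length - P.length) + 1 := by omega
        rw [hn, hw]
        show Letter.L :: buildWord u s P.length (Q'.length - P.length) =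
          Function.update u (Q'.length + 1) [] (P.length + (Q'.length - P.length) + 1) ++
            Function.update s (Q'.length + 1) Letter.L (P.length + (Q'.length - P.length) + 1) ::
            buildWord (Function.update u (Q'.length + 1) [])
              (Function.update s (Q'.length + 1) Letter.L) P.length (Q'.length - P.length)
        have he : P.length + (Q'.length - P.length) + 1 = Q'.length + 1 := by omega
        rw [he, Function.update_self, Function.update_self,
          buildWord_congr (Q'.length - P.length) _ u _ s P.length
            (fun j hj => Function.update_of_ne (by omega) _ u)
            (fun j hj => Function.update_of_ne (by omega) _ s)]
        simp
    | R =>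
      simp only [act, Option.some_inj] at hQQ
      have hlen : Q.length = Q'.length + 1 := by rw [← hQQ]; simp
      refine ⟨Function.update u (Q'.length + 1) [],
        Function.update s (Q'.length + 1) Letter.R, ?_, ?_, ?_⟩
      · intro j h1 h2 t ht
        by_cases hj : j = Q'.length + 1
        · subst hj; rw [Function.update_self] at ht; exact absurd ht (by simp)
        · rw [Function.update_of_ne hj] at ht
          exact hu j h1 (by omega) t ht
      · intro j h1 h2
        by_cases hj : j = Q'.length + 1
        · subst hj; rw [Function.update_self]; exact Or.inr rfl
        · rw [Function.update_of_ne hj]; exact hs j h1 (by omega)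
      · have hn : Q.length - P.length = (Q'.length - P.length) + 1 := by omega
        rw [hn, hw]
        show Letter.R :: buildWord u s P.length (Q'.length - P.length) =
          Function.update u (Q'.length + 1) [] (P.length + (Q'.length - P.length) + 1) ++
            Function.update s (Q'.length + 1) Letter.R (P.length + (Q'.length - P.length) + 1) ::
            buildWord (Function.update u (Q'.length + 1) [])
              (Function.update s (Q'.length + 1) Letter.R) P.length (Q'.length - P.length)
        have he : P.length + (Q'.length - P.length) + 1 = Q'.length + 1 := by omega
        rw [he, Function.update_self, Function.update_self,
          buildWord_congr (Q'.length - P.length) _ u _ s P.length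
            (fun j hj => Function.update_of_ne (by omega) _ u)
            (fun j hj => Function.update_of_ne (by omega) _ s)]
        simp

theorem stmt15 (α : List ℕ) (hα : IsComposition α) (r : ℕ) (hr : α.length = r)
    (hr1 : 1 ≤ r) (hno : ¬ ∀ a ∈ α, a = 1) (k : ℕ) (hk : r ≤ k) :
    ∀ w : List Letter,
      (∀ t ∈ w, t = Letter.L ∨ t = Letter.R ∨ ∃ j, 1 ≤ j ∧ j ≤ k ∧ t = Letter.U j) →
      ((Admissible w α ∧ ∃ Q, actWord w α = some Q ∧ Q.length = k) ↔
        ∃ u : ℕ → List Letter, ∃ s : ℕ → Letter,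
          (∀ j, r ≤ j → j ≤ k → ∀ t ∈ u j, ∃ m, 1 ≤ m ∧ m ≤ j ∧ t = Letter.U m) ∧
          (∀ j, r < j → j ≤ k → s j = Letter.L ∨ s j = Letter.R) ∧
          w = buildWord u s r (k - r)) := by
  intro w _
  constructor
  · rintro ⟨hadm, Q, hQ, hlen⟩
    obtain ⟨u, s, hu, hs, hw⟩ := forward w α Q hadm hQ
    rw [hr, hlen] at hu hs hw
    exact ⟨u, s, hu, hs, hw⟩
  · rintro ⟨u, s, hu, hs, hw⟩
    subst hw
    have hG := good_of_not_allones α hα hno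
    obtain ⟨h1, Q, h2, h3, -⟩ := backward α u s (k - r)
      (fun j hj1 hj2 => hu j (by omega) (by omega))
      (fun j hj1 hj2 => hs j (by omega) (by omega)) hG
    rw [hr] at h1 h2
    exact ⟨h1, Q, h2, by omega⟩
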